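/- Let b₁,…,bₙ be a basis of ℝⁿ with dual basis b₁*,…,bₙ* (⟨b_i*, b_j⟩ = δ_{ij} for the standard inner product ⟨·,·⟩). Let 1 ≤ n' ≤ n, let α₁,…,α_{n'} be positive rational numbers, set b_{n+1} := α₁b₁ + ⋯ + α_{n'}b_{n'}, and fix i₀ ∈ {1,…,n'}. Let N₁ be the additive subgroup of ℝⁿ generated by {b_i : 1 ≤ i ≤ n+1, i ≠ i₀}. Then the dual lattice {x ∈ ℝⁿ : ⟨x, w⟩ ∈ ℤ for all w ∈ N₁} equals the additive subgroup of ℝⁿ generated by the vectors b_i* − (α_i/α_{i₀})·b_{i₀}* for i ∈ {1,…,n'}∖{i₀}, together with (1/α_{i₀})·b_{i₀}*, together with b_i* for n' < i ≤ n. -/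

import Mathlib

open scoped RealInnerProductSpace BigOperators

noncomputable section

/-- Euclidean space `ℝⁿ` with the standard inner product. -/
abbrev E (n : ℕ) : Type := EuclideanSpace ℝ (Fin n)

/-- Let `b₁,…,bₙ` be a basis of `ℝⁿ` with dual basis `b₁*,…,bₙ*`, let
`1 ≤ n' ≤ n`, `α₁,…,α_{n'}` positive rationals, `b_{n+1} := α₁b₁ + ⋯ + α_{n'}b_{n'}`,
and fix `i₀ ∈ {1,…,n'}`.  Let `N₁` be the additive subgroup generated by
`{b_i : 1 ≤ i ≤ n+1, i ≠ i₀}`.  Then the dual lattice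
`{x : ⟨x,w⟩ ∈ ℤ for all w ∈ N₁}` is the additive subgroup generated by the vectors
`b_i* − (α_i/α_{i₀})·b_{i₀}*` for `i ∈ {1,…,n'}∖{i₀}`, together with
`(1/α_{i₀})·b_{i₀}*`, together with `b_i*` for `n' < i ≤ n`. -/
theorem stmt6 (n n' : ℕ) (hn'1 : 1 ≤ n') (hn'n : n' ≤ n)
    (b bs : Fin n → E n)
    (hb : LinearIndependent ℝ b)
    (hspan : Submodule.span ℝ (Set.range b) = ⊤)
    (hdual : ∀ i j : Fin n, ⟪bs i, b j⟫ = if i = j then 1 else 0)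
    (α : Fin n → ℚ) (hα : ∀ i : Fin n, i.val < n' → 0 < α i)
    (i₀ : Fin n) (hi₀ : i₀.val < n')
    (blast : E n)
    (hblast : blast =
      ∑ i ∈ Finset.univ.filter (fun i : Fin n => i.val < n'), (α i : ℝ) • b i)
    (N₁ : AddSubgroup (E n))
    (hN₁ : N₁ = AddSubgroup.closure ((b '' {i | i ≠ i₀}) ∪ {blast})) :
    {x : E n | ∀ w ∈ N₁, ∃ k : ℤ, ⟪x, w⟫ = (k : ℝ)} =
      ↑(AddSubgroup.closure
        (((fun i => bs i - ((α i / α i₀ : ℚ) : ℝ) • bs i₀) ''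
            {i : Fin n | i.val < n' ∧ i ≠ i₀})
          ∪ {((α i₀ : ℚ) : ℝ)⁻¹ • bs i₀}
          ∪ (bs '' {i : Fin n | n' ≤ i.val}))) := by
  have hαi₀ : (0:ℝ) < ((α i₀ : ℚ) : ℝ) := by exact_mod_cast hα i₀ hi₀
  -- inner product of anything with blast
  have hzblast : ∀ z : E n, ⟪z, blast⟫ =
      ∑ i ∈ Finset.univ.filter (fun i : Fin n => i.val < n'), (α i : ℝ) * ⟪z, b i⟫ := by
    intro z
    rw [hblast, inner_sum]
    exact Finset.sum_congr rfl fun i _ => real_inner_smul_right z (b i) _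
  have hbsblast : ∀ i : Fin n, ⟪bs i, blast⟫ = if i.val < n' then ((α i : ℚ) : ℝ) else 0 := by
    intro i
    rw [hzblast]
    have : ∀ j ∈ Finset.univ.filter (fun j : Fin n => j.val < n'),
        (α j : ℝ) * ⟪bs i, b j⟫ = if j = i then (α j : ℝ) else 0 := by
      intro j _
      rw [hdual]
      by_cases hji : j = i
      · subst hji; simp
      · rw [if_neg (show ¬ i = j from fun h => hji h.symm), if_neg hji, mul_zero]
    rw [Finset.sum_congr rfl this, Finset.sum_ite_eq']
    simp
  -- The set of `w` pairing integrally with a fixed `x`, as a subgroup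
  have hdual_of : ∀ x : E n, (∀ j : Fin n, j ≠ i₀ → ∃ k : ℤ, ⟪x, b j⟫ = (k:ℝ)) →
      (∃ k : ℤ, ⟪x, blast⟫ = (k:ℝ)) → ∀ w ∈ N₁, ∃ k : ℤ, ⟪x, w⟫ = (k:ℝ) := by
    intro x h1 h2
    let S : AddSubgroup (E n) :=
      { carrier := {w | ∃ k : ℤ, ⟪x, w⟫ = (k:ℝ)}
        zero_mem' := ⟨0, by simp⟩
        add_mem' := by
          rintro u v ⟨k, hk⟩ ⟨l, hl⟩
          exact ⟨k + l, by rw [inner_add_right, hk, hl]; push_cast; ring⟩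
        neg_mem' := by
          rintro u ⟨k, hk⟩
          exact ⟨-k, by rw [inner_neg_right, hk]; push_cast; ring⟩ }
    have hle : N₁ ≤ S := by
      rw [hN₁]
      apply (AddSubgroup.closure_le S).mpr
      rintro w (⟨j, hj, rfl⟩ | rfl)
      · exact h1 j hj
      · exact h2
    exact fun w hw => hle hw
  ext x
  simp only [Set.mem_setOf_eq, SetLike.mem_coe]
  constructor
  · -- dual ⊆ closure
    intro hx
    have hbmem : ∀ j : Fin n, j ≠ i₀ → ∃ k : ℤ, ⟪x, b j⟫ = (k:ℝ) := by
      intro j hj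
      refine hx (b j) ?_
      rw [hN₁]
      exact AddSubgroup.subset_closure (Or.inl ⟨j, hj, rfl⟩)
    choose! k hk using hbmem
    obtain ⟨m, hm⟩ := hx blast (by rw [hN₁]; exact AddSubgroup.subset_closure (Or.inr rfl))
    set S₁ : Finset (Fin n) := Finset.univ.filter (fun i : Fin n => i.val < n' ∧ i ≠ i₀) with hS₁
    set S₂ : Finset (Fin n) := Finset.univ.filter (fun i : Fin n => n' ≤ i.val) with hS₂
    set y : E n := (∑ i ∈ S₁, ((k i : ℝ)) • (bs i - ((α i / α i₀ : ℚ) : ℝ) • bs i₀))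
        + (m : ℝ) • (((α i₀ : ℚ) : ℝ)⁻¹ • bs i₀)
        + ∑ i ∈ S₂, ((k i : ℝ)) • bs i with hy
    have hymem : y ∈ AddSubgroup.closure
        (((fun i => bs i - ((α i / α i₀ : ℚ) : ℝ) • bs i₀) ''
            {i : Fin n | i.val < n' ∧ i ≠ i₀})
          ∪ {((α i₀ : ℚ) : ℝ)⁻¹ • bs i₀}
          ∪ (bs '' {i : Fin n | n' ≤ i.val})) := by
      set G := AddSubgroup.closure
        (((fun i => bs i - ((α i / α i₀ : ℚ) : ℝ) • bs i₀) ''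
            {i : Fin n | i.val < n' ∧ i ≠ i₀})
          ∪ {((α i₀ : ℚ) : ℝ)⁻¹ • bs i₀}
          ∪ (bs '' {i : Fin n | n' ≤ i.val}))
      refine add_mem (add_mem ?_ ?_) ?_
      · refine AddSubgroup.sum_mem _ fun i hi => ?_
        rw [Int.cast_smul_eq_zsmul]
        refine AddSubgroup.zsmul_mem _ (AddSubgroup.subset_closure ?_) _
        simp only [hS₁, Finset.mem_filter] at hi
        exact Set.mem_union_left _ (Set.mem_union_left _ ⟨i, hi.2, rfl⟩)
      · rw [Int.cast_smul_eq_zsmul]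
        refine AddSubgroup.zsmul_mem _ (AddSubgroup.subset_closure ?_) _
        exact Set.mem_union_left _ (Set.mem_union_right _ rfl)
      · refine AddSubgroup.sum_mem _ fun i hi => ?_
        rw [Int.cast_smul_eq_zsmul]
        refine AddSubgroup.zsmul_mem _ (AddSubgroup.subset_closure ?_) _
        simp only [hS₂, Finset.mem_filter] at hi
        exact Set.mem_union_right _ ⟨i, hi.2, rfl⟩
    -- compute ⟪y, b j⟫
    have hyb : ∀ j : Fin n, ⟪y, b j⟫ = ⟪x, b j⟫ := by
      intro j
      have hsum1 : ⟪(∑ i ∈ S₁, ((k i : ℝ)) • (bs i - ((α i / α i₀ : ℚ) : ℝ) • bs i₀)), b j⟫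
          = ∑ i ∈ S₁, (k i : ℝ) * ((if i = j then (1:ℝ) else 0)
              - ((α i / α i₀ : ℚ) : ℝ) * (if i₀ = j then (1:ℝ) else 0)) := by
        rw [sum_inner]
        refine Finset.sum_congr rfl fun i _ => ?_
        rw [real_inner_smul_left, inner_sub_left, real_inner_smul_left, hdual, hdual]
      have hsum2 : ⟪(∑ i ∈ S₂, ((k i : ℝ)) • bs i), b j⟫
          = ∑ i ∈ S₂, (k i : ℝ) * (if i = j then (1:ℝ) else 0) := by
        rw [sum_inner]
        refine Finset.sum_congr rfl fun i _ => ?_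
        rw [real_inner_smul_left, hdual]
      rw [hy, inner_add_left, inner_add_left, hsum1, hsum2, real_inner_smul_left,
        real_inner_smul_left, hdual]
      by_cases hj : j = i₀
      · subst hj
        have h1 : ∑ i ∈ S₁, (k i : ℝ) * ((if i = j then (1:ℝ) else 0)
              - ((α i / α j : ℚ) : ℝ) * (if j = j then (1:ℝ) else 0))
            = ∑ i ∈ S₁, -((k i : ℝ) * ((α i / α j : ℚ) : ℝ)) := by
          refine Finset.sum_congr rfl fun i hi => ?_
          simp only [hS₁, Finset.mem_filter] at hi
          rw [if_neg hi.2.2, if_pos rfl]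
          ring
        have h2 : ∑ i ∈ S₂, (k i : ℝ) * (if i = j then (1:ℝ) else 0) = 0 := by
          refine Finset.sum_eq_zero fun i hi => ?_
          simp only [hS₂, Finset.mem_filter] at hi
          rw [if_neg fun h => by exact absurd hi.2 (by rw [h]; omega)]
          ring
        rw [h1, h2, if_pos rfl]
        -- use hm : ⟪x, blast⟫ = m, with the i₀ term split off
        have hsplit : Finset.univ.filter (fun i : Fin n => i.val < n') = insert j S₁ := by
          ext i
          simp only [hS₁, Finset.mem_filter, Finset.mem_insert, Finset.mem_univ, true_and]
          constructor
          · intro hlt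
            by_cases h : i = j
            · exact Or.inl h
            · exact Or.inr ⟨hlt, h⟩
          · rintro (rfl | ⟨hlt, _⟩)
            · exact hi₀
            · exact hlt
        have hjS₁ : j ∉ S₁ := by simp [hS₁]
        have hmval : (m : ℝ) = ((α j : ℚ) : ℝ) * ⟪x, b j⟫
            + ∑ i ∈ S₁, ((α i : ℚ) : ℝ) * ⟪x, b i⟫ := by
          rw [← hm, hzblast, hsplit, Finset.sum_insert hjS₁]
        have hkval : ∀ i ∈ S₁, ((α i : ℚ) : ℝ) * ⟪x, b i⟫ = ((α i : ℚ) : ℝ) * (k i : ℝ) := by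
          intro i hi
          simp only [hS₁, Finset.mem_filter] at hi
          rw [hk i hi.2.2]
        rw [Finset.sum_congr rfl hkval] at hmval
        have hα0 : ((α j : ℚ) : ℝ) ≠ 0 := ne_of_gt hαi₀
        have hA : ∑ i ∈ S₁, -((k i : ℝ) * ((α i / α j : ℚ) : ℝ))
            = -(∑ i ∈ S₁, ((α i : ℚ) : ℝ) * (k i : ℝ)) / ((α j : ℚ) : ℝ) := by
          rw [neg_div, Finset.sum_div, ← Finset.sum_neg_distrib]
          refine Finset.sum_congr rfl fun i _ => ?_
          push_cast
          ring
        rw [hA, hmval]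
        set s := ∑ i ∈ S₁, ((α i : ℚ) : ℝ) * (k i : ℝ) with hs
        field_simp
        ring
      · -- j ≠ i₀
        have h1 : ∑ i ∈ S₁, (k i : ℝ) * ((if i = j then (1:ℝ) else 0)
              - ((α i / α i₀ : ℚ) : ℝ) * (if i₀ = j then (1:ℝ) else 0))
            = if j ∈ S₁ then (k j : ℝ) else 0 := by
          rw [← Finset.sum_ite_eq' S₁ j (fun i => (k i : ℝ))]
          refine Finset.sum_congr rfl fun i _ => ?_
          rw [if_neg (show ¬ i₀ = j from fun h => hj h.symm)]
          by_cases h : i = j <;> simp [h]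
        have h2 : ∑ i ∈ S₂, (k i : ℝ) * (if i = j then (1:ℝ) else 0)
            = if j ∈ S₂ then (k j : ℝ) else 0 := by
          rw [← Finset.sum_ite_eq' S₂ j (fun i => (k i : ℝ))]
          refine Finset.sum_congr rfl fun i _ => ?_
          by_cases h : i = j <;> simp [h]
        rw [h1, h2, if_neg (show ¬ i₀ = j from fun h => hj h.symm), mul_zero, mul_zero, add_zero]
        have := hk j hj
        by_cases hjn : j.val < n'
        · rw [if_pos (by simp [hS₁, hjn, hj]), if_neg (by simp [hS₂]; omega), add_zero, this]
        · rw [if_neg (by simp [hS₁]; omega), if_pos (by simp [hS₂]; omega), zero_add, this]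
    -- conclude x = y
    have hxy : x = y := by
      have hz : ∀ j : Fin n, ⟪x - y, b j⟫ = 0 := by
        intro j
        rw [inner_sub_left, hyb j, sub_self]
      have : x - y ∈ (Submodule.span ℝ (Set.range b))ᗮ := by
        rw [Submodule.mem_orthogonal']
        intro u hu
        induction hu using Submodule.span_induction with
        | mem u hu => obtain ⟨j, rfl⟩ := hu; exact hz j
        | zero => simp
        | add u v _ _ hu hv => rw [inner_add_right, hu, hv, add_zero]
        | smul c u _ hu => rw [real_inner_smul_right, hu, mul_zero]
      rw [hspan, Submodule.top_orthogonal_eq_bot, Submodule.mem_bot, sub_eq_zero] at this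
      exact this
    rw [hxy]
    exact hymem
  · -- closure ⊆ dual
    intro hx
    set D : AddSubgroup (E n) :=
      { carrier := {x : E n | ∀ w ∈ N₁, ∃ k : ℤ, ⟪x, w⟫ = (k:ℝ)}
        zero_mem' := fun w _ => ⟨0, by simp⟩
        add_mem' := by
          rintro u v hu hv w hw
          obtain ⟨kk, hkk⟩ := hu w hw
          obtain ⟨l, hl⟩ := hv w hw
          exact ⟨kk + l, by rw [inner_add_left, hkk, hl]; push_cast; ring⟩
        neg_mem' := by
          rintro u hu w hw
          obtain ⟨kk, hkk⟩ := hu w hw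
          exact ⟨-kk, by rw [inner_neg_left, hkk]; push_cast; ring⟩ } with hD
    have hle : AddSubgroup.closure
        (((fun i => bs i - ((α i / α i₀ : ℚ) : ℝ) • bs i₀) ''
            {i : Fin n | i.val < n' ∧ i ≠ i₀})
          ∪ {((α i₀ : ℚ) : ℝ)⁻¹ • bs i₀}
          ∪ (bs '' {i : Fin n | n' ≤ i.val})) ≤ D := by
      apply (AddSubgroup.closure_le D).mpr
      rintro v ((⟨i, ⟨hin, hii₀⟩, rfl⟩ | rfl) | ⟨i, hin, rfl⟩)
      · -- v = bs i - (αᵢ/α_{i₀}) bs i₀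
        refine hdual_of _ (fun j hj => ?_) ?_
        · refine ⟨if i = j then 1 else 0, ?_⟩
          rw [inner_sub_left, real_inner_smul_left, hdual, hdual,
            if_neg (show ¬ i₀ = j from fun h => hj h.symm), mul_zero, sub_zero]
          split <;> simp
        · refine ⟨0, ?_⟩
          rw [inner_sub_left, real_inner_smul_left, hbsblast, hbsblast,
            if_pos hin, if_pos hi₀]
          have hα0 : ((α i₀ : ℚ) : ℝ) ≠ 0 := ne_of_gt hαi₀
          push_cast
          field_simp
          simp
      · -- v = (α i₀)⁻¹ • bs i₀
        refine hdual_of _ (fun j hj => ?_) ?_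
        · refine ⟨0, ?_⟩
          rw [real_inner_smul_left, hdual, if_neg (show ¬ i₀ = j from fun h => hj h.symm), mul_zero]
          simp
        · refine ⟨1, ?_⟩
          rw [real_inner_smul_left, hbsblast, if_pos hi₀]
          have hα0 : ((α i₀ : ℚ) : ℝ) ≠ 0 := ne_of_gt hαi₀
          field_simp
          simp
      · -- v = bs i, n' ≤ i
        refine hdual_of _ (fun j hj => ?_) ?_
        · refine ⟨if i = j then 1 else 0, ?_⟩
          rw [hdual]; split <;> simp
        · refine ⟨0, ?_⟩
          simp only [Set.mem_setOf_eq] at hin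
          rw [hbsblast, if_neg (by omega)]
          simp
    exact hle hx
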